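/- Let R be a commutative ring and A, B ∈ W(R) Witt vectors such that for every index i, A_i = 0 or B_i = 0. Then the Witt vector sum A + B has coordinates (A_0 + B_0, A_1 + B_1, A_2 + B_2, ...). -/
import Mathlib

open WittVector MvPolynomial

lemma add_pow_of_mul_eq_zero' {S : Type*} [CommRing S] {a b : S} (h : a * b = 0) (n : ℕ) :
    (a + b) ^ (n + 1) = a ^ (n + 1) + b ^ (n + 1) := by
  induction n with
  | zero => simp
  | succ n ih =>
    rw [pow_succ, ih, add_mul, mul_add, mul_add]
    have h1 : a ^ (n + 1) * b = 0 := by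
      rw [pow_succ, mul_assoc, h, mul_zero]
    have h2 : b ^ (n + 1) * a = 0 := by
      rw [pow_succ, mul_assoc, mul_comm b a, h, mul_zero]
    rw [h1, h2, ← pow_succ, ← pow_succ]
    ring

lemma ghost_case (p : ℕ) [hp : Fact p.Prime] (S : Type*) [CommRing S] [Invertible (p : S)]
    (x y : WittVector p S) (h : ∀ i, x.coeff i * y.coeff i = 0) :
    x + y = WittVector.mk p (fun i => x.coeff i + y.coeff i) := by
  apply (WittVector.ghostMap.bijective_of_invertible p S).injective
  rw [map_add]
  funext n
  simp only [Pi.add_apply, ghostMap_apply, ghostComponent_apply, aeval_wittPolynomial, coeff_mk]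
  rw [← Finset.sum_add_distrib]
  refine Finset.sum_congr rfl fun i _ => ?_
  rw [← mul_add]
  congr 1
  rcases Nat.exists_eq_add_of_lt (pow_pos hp.1.pos (n - i)) with ⟨k, hk⟩
  rw [show p ^ (n - i) = k + 1 by omega]
  exact (add_pow_of_mul_eq_zero' (h i) k).symm

lemma generic_case (p : ℕ) [hp : Fact p.Prime]
    (x y : WittVector p (MvPolynomial ℕ ℤ)) (h : ∀ i, x.coeff i * y.coeff i = 0) :
    x + y = WittVector.mk p (fun i => x.coeff i + y.coeff i) := by
  have hinj : Function.Injective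
      (WittVector.map (MvPolynomial.map (Int.castRingHom ℚ)) :
        WittVector p (MvPolynomial ℕ ℤ) → WittVector p (MvPolynomial ℕ ℚ)) :=
    WittVector.map_injective _ (MvPolynomial.map_injective _ Int.cast_injective)
  apply hinj
  rw [map_add]
  have := ghost_case p (MvPolynomial ℕ ℚ)
    (WittVector.map (MvPolynomial.map (Int.castRingHom ℚ)) x)
    (WittVector.map (MvPolynomial.map (Int.castRingHom ℚ)) y)
    (fun i => by rw [map_coeff, map_coeff, ← map_mul, h i, map_zero])
  rw [this]
  apply WittVector.ext
  intro n
  simp [map_coeff, coeff_mk, map_add]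

/-- Let `R` be a commutative ring and `A, B ∈ W(R)` (p-typical) Witt vectors such that for every
index `i`, `A_i = 0` or `B_i = 0`.  Then the Witt vector sum `A + B` has coordinates
`(A_0 + B_0, A_1 + B_1, A_2 + B_2, …)`. -/
theorem stmt_11 (p : ℕ) [hp : Fact p.Prime] (R : Type*) [CommRing R]
    (A B : WittVector p R) (h : ∀ i, A.coeff i = 0 ∨ B.coeff i = 0) :
    ∀ i, (A + B).coeff i = A.coeff i + B.coeff i := by
  classical
  set φ : MvPolynomial ℕ ℤ →+* R :=
    (MvPolynomial.aeval (fun i => if A.coeff i = 0 then B.coeff i else A.coeff i)).toRingHom with hφ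
  set A' : WittVector p (MvPolynomial ℕ ℤ) :=
    WittVector.mk p (fun i => if A.coeff i = 0 then 0 else MvPolynomial.X i) with hA'
  set B' : WittVector p (MvPolynomial ℕ ℤ) :=
    WittVector.mk p (fun i => if A.coeff i = 0 then MvPolynomial.X i else 0) with hB'
  have hmul : ∀ i, A'.coeff i * B'.coeff i = 0 := by
    intro i
    simp only [hA', hB', coeff_mk]
    split <;> simp
  have hmapA : WittVector.map φ A' = A := by
    apply WittVector.ext
    intro n
    rw [map_coeff]
    simp only [hA', coeff_mk]
    split
    · simp [*]
    · simp [hφ, *]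
  have hmapB : WittVector.map φ B' = B := by
    apply WittVector.ext
    intro n
    rw [map_coeff]
    simp only [hB', coeff_mk]
    split
    · simp [hφ, *]
    · rcases h n with h1 | h1
      · exact absurd h1 (by assumption)
      · simp [h1]
  intro i
  calc (A + B).coeff i = φ ((A' + B').coeff i) := by
        rw [← hmapA, ← hmapB, ← map_add, map_coeff]
    _ = φ (A'.coeff i + B'.coeff i) := by
        rw [generic_case p A' B' hmul, coeff_mk]
    _ = A.coeff i + B.coeff i := by
        rw [map_add, ← map_coeff φ, ← map_coeff φ, hmapA, hmapB]
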